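/- For any ω ∈ so(n), the adjoint orbit of E(n) through (ω,0) is exactly the set {(ω',v') ∈ so(n) × ℝⁿ : (∃ r ∈ O(n), ω' = r ω r⁻¹) and v' ∈ range(ω')}. (Hence this adjoint orbit, via the projection (ω',v') ↦ ω', is a vector bundle over the O(n)-conjugation orbit of ω, with fibre over ω' the subspace range(ω'); this is the vector bundle of Theorem on the orbit bijection, Part 1.) -/
import Mathlib


open Matrix

abbrev Mat (n : ℕ) := Matrix (Fin n) (Fin n) ℝ
abbrev Vec (n : ℕ) := Fin n → ℝ

/-- `r` is an orthogonal matrix. -/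
def IsOrth {n : ℕ} (r : Mat n) : Prop := r * rᵀ = 1 ∧ rᵀ * r = 1

/-- `ω` is skew-symmetric. -/
def IsSkew {n : ℕ} (ω : Mat n) : Prop := ωᵀ = -ω

/-- Adjoint action of `(r,d) ∈ E(n)` on `(ω,v) ∈ so(n) × ℝⁿ`. -/
noncomputable def Ad {n : ℕ} (r : Mat n) (d : Vec n) (ω : Mat n) (v : Vec n) :
    Mat n × Vec n :=
  (r * ω * r⁻¹, r *ᵥ v - (r * ω * r⁻¹) *ᵥ d)

/-- The momentum map `μ(p,d) = ½(p dᵀ − d pᵀ)`. -/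
noncomputable def mu {n : ℕ} (p d : Vec n) : Mat n :=
  (1/2 : ℝ) • (vecMulVec p d - vecMulVec d p)

/-- Coadjoint action of `(r,d) ∈ E(n)` on `(L,p) ∈ so(n)* × (ℝⁿ)* ≃ so(n) × ℝⁿ`. -/
noncomputable def CoAd {n : ℕ} (r : Mat n) (d : Vec n) (L : Mat n) (p : Vec n) :
    Mat n × Vec n :=
  (r * L * r⁻¹ + mu (r *ᵥ p) d, r *ᵥ p)

/-- The adjoint orbit of `E(n)` through `(ω,0)` is the set of pairs `(ω',v')` with `ω'`
orthogonally conjugate to `ω` and `v' ∈ range ω'`. -/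
theorem stmt11 {n : ℕ} (ω : Mat n) (hω : IsSkew ω) :
    {x : Mat n × Vec n | ∃ (r : Mat n) (d : Vec n), IsOrth r ∧ Ad r d ω 0 = x} =
      {x : Mat n × Vec n |
        (∃ r : Mat n, IsOrth r ∧ x.1 = r * ω * r⁻¹) ∧ ∃ u : Vec n, x.1 *ᵥ u = x.2} := by
  ext ⟨ω', v'⟩
  simp only [Set.mem_setOf_eq, Ad, Prod.mk.injEq]
  constructor
  · rintro ⟨r, d, hr, h1, h2⟩
    refine ⟨⟨r, hr, h1.symm⟩, -d, ?_⟩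
    rw [← h1, ← h2]
    simp [Matrix.mulVec_neg]
  · rintro ⟨⟨r, hr, h1⟩, u, h2⟩
    refine ⟨r, -u, hr, h1.symm, ?_⟩
    rw [← h1, ← h2]
    simp [Matrix.mulVec_neg]
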